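/- Let h ≥ p ≥ 1 be integers and let T be a finite tree with diameter at least 3 and maximum degree Δ. If T contains T̂_{Δ−1,2} as a subtree (equivalently, T has a vertex of degree Δ all of whose neighbours have degree Δ), then λ_{h,p,p}(T) = λ*_{h,p,p}(T) = h + 2(Δ − 1)·p. -/

import Mathlib

open SimpleGraph

/-- An `L(h,p,p)`-labelling of `G` with span `ℓ`: labels in `{0,…,ℓ}`, labels of vertices at
distance 1 differ by at least `h`, labels of vertices at distance 2 or 3 differ by at least `p`. -/
def IsLLabelling {V : Type} (G : SimpleGraph V) (h p ℓ : ℕ) (f : V → ℕ) : Prop :=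
  (∀ v, f v ≤ ℓ) ∧
  (∀ u v, G.dist u v = 1 → (h : ℤ) ≤ |(f u : ℤ) - (f v : ℤ)|) ∧
  (∀ u v, G.dist u v = 2 ∨ G.dist u v = 3 → (p : ℤ) ≤ |(f u : ℤ) - (f v : ℤ)|)

/-- `λ_{h,p,p}(G)`: the minimum span of an `L(h,p,p)`-labelling of `G`. -/
noncomputable def lambdaNum {V : Type} (G : SimpleGraph V) (h p : ℕ) : ℕ :=
  sInf {ℓ : ℕ | ∃ f : V → ℕ, IsLLabelling G h p ℓ f}

/-- A circular interval modulo `n`: a set of residues of the form `{a, a+1, …, a+s}` mod `n`. -/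
def IsCircInterval (n : ℕ) (I : Set (ZMod n)) : Prop :=
  ∃ (a : ZMod n) (s : ℕ), I = {x : ZMod n | ∃ i : ℕ, i ≤ s ∧ x = a + (i : ZMod n)}

/-- An elegant `L(h,p,p)`-labelling: additionally each vertex `u` has a circular interval `I u`
modulo `ℓ+1` containing the labels of all neighbours of `u`, with `I u ∩ I v = ∅` for edges `uv`. -/
def IsElegantLLabelling {V : Type} (G : SimpleGraph V) (h p ℓ : ℕ) (f : V → ℕ) : Prop :=
  IsLLabelling G h p ℓ f ∧
  ∃ I : V → Set (ZMod (ℓ + 1)),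
    (∀ u, IsCircInterval (ℓ + 1) (I u)) ∧
    (∀ u w, G.Adj u w → ((f w : ZMod (ℓ + 1)) ∈ I u)) ∧
    (∀ u v, G.Adj u v → I u ∩ I v = ∅)

/-- `λ*_{h,p,p}(G)`: the minimum span of an elegant `L(h,p,p)`-labelling of `G`. -/
noncomputable def lambdaStar {V : Type} (G : SimpleGraph V) (h p : ℕ) : ℕ :=
  sInf {ℓ : ℕ | ∃ f : V → ℕ, IsElegantLLabelling G h p ℓ f}

/-- The `ℓ`-cyclic distance between labels `a` and `b`. -/
def cycDist (ℓ a b : ℕ) : ℤ :=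
  min |(a : ℤ) - (b : ℤ)| ((ℓ : ℤ) - |(a : ℤ) - (b : ℤ)|)

/-- A `C(h,p,p)`-labelling of `G` with span `ℓ`: labels in `{0,…,ℓ-1}`, and the `ℓ`-cyclic distance
between labels of vertices at distance 1 (resp. 2 or 3) is at least `h` (resp. `p`). -/
def IsCLabelling {V : Type} (G : SimpleGraph V) (h p ℓ : ℕ) (f : V → ℕ) : Prop :=
  (∀ v, f v < ℓ) ∧
  (∀ u v, G.dist u v = 1 → (h : ℤ) ≤ cycDist ℓ (f u) (f v)) ∧
  (∀ u v, G.dist u v = 2 ∨ G.dist u v = 3 → (p : ℤ) ≤ cycDist ℓ (f u) (f v))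

/-- `σ_{h,p,p}(G)`: the minimum positive `ℓ` such that `G` has a `C(h,p,p)`-labelling of span `ℓ`. -/
noncomputable def sigmaNum {V : Type} (G : SimpleGraph V) (h p : ℕ) : ℕ :=
  sInf {ℓ : ℕ | 0 < ℓ ∧ ∃ f : V → ℕ, IsCLabelling G h p ℓ f}

/-- An elegant `C(h,p,p)`-labelling: additionally each vertex `u` has a circular interval `I u`
modulo `ℓ` containing the labels of all neighbours of `u`, with `I u ∩ I v = ∅` for edges `uv`. -/
def IsElegantCLabelling {V : Type} (G : SimpleGraph V) (h p ℓ : ℕ) (f : V → ℕ) : Prop :=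
  IsCLabelling G h p ℓ f ∧
  ∃ I : V → Set (ZMod ℓ),
    (∀ u, IsCircInterval ℓ (I u)) ∧
    (∀ u w, G.Adj u w → ((f w : ZMod ℓ) ∈ I u)) ∧
    (∀ u v, G.Adj u v → I u ∩ I v = ∅)

/-- `σ*_{h,p,p}(G)`: the minimum positive `ℓ` such that `G` has an elegant `C(h,p,p)`-labelling
of span `ℓ`. -/
noncomputable def sigmaStar {V : Type} (G : SimpleGraph V) (h p : ℕ) : ℕ :=
  sInf {ℓ : ℕ | 0 < ℓ ∧ ∃ f : V → ℕ, IsElegantCLabelling G h p ℓ f}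

/-- `Δ₂(G) = max over edges uv of (deg u + deg v)`. -/
noncomputable def deltaTwo {V : Type} (G : SimpleGraph V) [Fintype V] [DecidableRel G.Adj] : ℕ :=
  sSup {d : ℕ | ∃ u v : V, G.Adj u v ∧ d = G.degree u + G.degree v}

variable {V : Type} [DecidableEq V]

/-- separated finset span lemma -/
lemma sepSpan (p : ℕ) : ∀ (n : ℕ) (A : Finset ℤ) (lo hi : ℤ), A.card = n → A.Nonempty →
    (∀ a ∈ A, ∀ b ∈ A, a ≠ b → (p : ℤ) ≤ |a - b|) →
    (∀ a ∈ A, lo ≤ a) → (∀ a ∈ A, a ≤ hi) →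
    lo + ((n : ℤ) - 1) * p ≤ hi := by
  intro n
  induction n with
  | zero => intro A lo hi hc hne _ _ _; simp [Finset.card_eq_zero] at hc; simp [hc] at hne
  | succ n ih =>
    intro A lo hi hc hne hsep hlo hhi
    rcases Nat.eq_zero_or_pos n with hn | hn
    · subst hn
      obtain ⟨a, ha⟩ := hne
      have := le_trans (hlo a ha) (hhi a ha)
      push_cast; linarith
    · set M := A.max' hne with hM
      have hMA : M ∈ A := A.max'_mem hne
      have hc' : (A.erase M).card = n := by rw [Finset.card_erase_of_mem hMA, hc]; rfl
      have hne' : (A.erase M).Nonempty := Finset.card_pos.mp (by omega)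
      have key : lo + ((n : ℤ) - 1) * p ≤ M - p := by
        apply ih (A.erase M) lo (M - p) hc' hne'
        · intro a ha b hb hab
          exact hsep a (Finset.mem_of_mem_erase ha) b (Finset.mem_of_mem_erase hb) hab
        · intro a ha; exact hlo a (Finset.mem_of_mem_erase ha)
        · intro a ha
          have haA := Finset.mem_of_mem_erase ha
          have hane : a ≠ M := Finset.ne_of_mem_erase ha
          have h1 : a ≤ M := A.le_max' a haA
          have h2 : (p : ℤ) ≤ |a - M| := hsep a haA M hMA hane
          have : |a - M| = M - a := by rw [abs_of_nonpos (by linarith)]; ring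
          rw [this] at h2; linarith
      have : M ≤ hi := hhi M hMA
      push_cast
      push_cast at key
      linarith

section Tree

variable (G : SimpleGraph V)

lemma tree_path_unique (hT : G.IsTree) {a b : V} {W W' : G.Walk a b}
    (hW : W.IsPath) (hW' : W'.IsPath) : W = W' :=
  (hT.existsUnique_path a b).unique hW hW'

lemma tree_dist_eq (hT : G.IsTree) {a b : V} {W : G.Walk a b} (hW : W.IsPath) :
    G.dist a b = W.length := by
  obtain ⟨P, hP, hlen⟩ := hT.isConnected.exists_path_of_dist a b
  rw [← hlen, tree_path_unique G hT hP hW]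

/-- walk split at a support vertex -/
lemma mem_support_dist {u r x : V} (W : G.Walk u r) (hx : x ∈ W.support) :
    G.dist u x + G.dist r x ≤ W.length := by
  have h1 : G.dist u x ≤ (W.takeUntil x hx).length := dist_le _
  have h2 : G.dist r x ≤ (W.dropUntil x hx).length := by
    rw [SimpleGraph.dist_comm]; exact dist_le _
  have h3 : (W.takeUntil x hx).length + (W.dropUntil x hx).length = W.length := by
    have := congrArg SimpleGraph.Walk.length (W.take_spec hx)
    rwa [SimpleGraph.Walk.length_append] at this
  omega

end Tree

set_option linter.unusedSectionVars false

section Tree2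
variable (G : SimpleGraph V)

/-- the unique path from `v` to `r` in a tree -/
noncomputable def qth (hT : G.IsTree) (r v : V) : G.Walk v r :=
  (hT.existsUnique_path v r).exists.choose

lemma qth_isPath (hT : G.IsTree) (r v : V) : (qth G hT r v).IsPath :=
  (hT.existsUnique_path v r).exists.choose_spec

lemma qth_length (hT : G.IsTree) (r v : V) : (qth G hT r v).length = G.dist v r :=
  (tree_dist_eq G hT (qth_isPath G hT r v)).symm

/-- the parent of `v` w.r.t. root `r` -/
noncomputable def par (hT : G.IsTree) (r v : V) : V := (qth G hT r v).getVert 1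

lemma dist_lt_of_mem_qth (hT : G.IsTree) {r u x : V} (hx : x ∈ (qth G hT r u).support)
    (hne : x ≠ u) : G.dist r x + 1 ≤ G.dist r u := by
  have h := mem_support_dist G (qth G hT r u) hx
  rw [qth_length] at h
  have h1 : 1 ≤ G.dist u x := hT.isConnected.pos_dist_of_ne (fun e => hne e.symm)
  rw [SimpleGraph.dist_comm (u := r) (v := u)]
  rw [SimpleGraph.dist_comm (u := r) (v := x)] at *
  omega

lemma adj_dist_cases (hT : G.IsTree) (r : V) {u v : V} (ha : G.Adj u v) :
    G.dist r v = G.dist r u + 1 ∨ G.dist r u = G.dist r v + 1 := by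
  have hd1 : G.dist u v = 1 := dist_eq_one_iff_adj.mpr ha
  have ht1 : G.dist r v ≤ G.dist r u + 1 := by
    have := hT.isConnected.dist_triangle (u := r) (v := u) (w := v); omega
  have ht2 : G.dist r u ≤ G.dist r v + 1 := by
    have := hT.isConnected.dist_triangle (u := r) (v := v) (w := u)
    rw [SimpleGraph.dist_comm (u := v) (v := u)] at this; omega
  have hne : G.dist r u ≠ G.dist r v := by
    intro heq
    by_cases hv : v ∈ (qth G hT r u).support
    · have := dist_lt_of_mem_qth G hT hv ha.ne'
      omega
    · -- cons the edge onto the path from u to r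
      have hP : (SimpleGraph.Walk.cons ha.symm (qth G hT r u)).IsPath :=
        (qth_isPath G hT r u).cons hv
      have := tree_dist_eq G hT hP
      rw [SimpleGraph.Walk.length_cons, qth_length] at this
      rw [SimpleGraph.dist_comm (u := r) (v := u), SimpleGraph.dist_comm (u := r) (v := v)] at heq
      omega
  omega

lemma par_spec (hT : G.IsTree) {r v : V} (hv : v ≠ r) :
    G.Adj v (par G hT r v) ∧ G.dist r (par G hT r v) + 1 = G.dist r v := by
  have hlen : 1 ≤ (qth G hT r v).length := by
    rw [qth_length]
    exact hT.isConnected.pos_dist_of_ne hv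
  have hadj : G.Adj ((qth G hT r v).getVert 0) ((qth G hT r v).getVert 1) :=
    SimpleGraph.Walk.adj_getVert_succ _ (by omega)
  rw [SimpleGraph.Walk.getVert_zero] at hadj
  have hpar : par G hT r v = (qth G hT r v).getVert 1 := rfl
  rw [← hpar] at hadj
  refine ⟨hadj, ?_⟩
  have hmem : par G hT r v ∈ (qth G hT r v).support := by
    rw [hpar]
    rw [SimpleGraph.Walk.mem_support_iff_exists_getVert]
    exact ⟨1, rfl, by omega⟩
  have h1 := dist_lt_of_mem_qth G hT hmem hadj.ne'
  rcases adj_dist_cases G hT r hadj with h | h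
  · omega
  · omega

lemma par_eq (hT : G.IsTree) {r u v : V} (ha : G.Adj u v)
    (hd : G.dist r v = G.dist r u + 1) : par G hT r v = u := by
  have hvu : v ≠ u := ha.ne'
  by_cases hv : v ∈ (qth G hT r u).support
  · have := dist_lt_of_mem_qth G hT hv hvu; omega
  · have hP : (SimpleGraph.Walk.cons ha.symm (qth G hT r u)).IsPath :=
      (qth_isPath G hT r u).cons hv
    have hvr : v ≠ r := by
      intro e; subst e
      rw [SimpleGraph.dist_eq_zero_iff_eq_or_not_reachable.mpr (Or.inl rfl)] at hd
      omega
    have heq : qth G hT r v = SimpleGraph.Walk.cons ha.symm (qth G hT r u) :=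
      tree_path_unique G hT (qth_isPath G hT r v) hP
    unfold par
    rw [heq]
    simp [SimpleGraph.Walk.getVert_cons_succ, SimpleGraph.Walk.getVert_zero]

lemma adj_cases (hT : G.IsTree) (r : V) {u v : V} (ha : G.Adj u v) :
    (v ≠ r ∧ par G hT r v = u) ∨ (u ≠ r ∧ par G hT r u = v) := by
  rcases adj_dist_cases G hT r ha with h | h
  · left
    have hvr : v ≠ r := by
      intro e; subst e
      rw [SimpleGraph.dist_eq_zero_iff_eq_or_not_reachable.mpr (Or.inl rfl)] at h
      omega
    exact ⟨hvr, par_eq G hT ha h⟩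
  · right
    have hur : u ≠ r := by
      intro e; subst e
      rw [SimpleGraph.dist_eq_zero_iff_eq_or_not_reachable.mpr (Or.inl rfl)] at h
      omega
    exact ⟨hur, par_eq G hT ha.symm h⟩

lemma walk_parity (hT : G.IsTree) (r : V) {a b : V} (W : G.Walk a b) :
    (G.dist r a + W.length) % 2 = G.dist r b % 2 := by
  induction W with
  | nil => simp
  | @cons x y z hxy q ih =>
    rcases adj_dist_cases G hT r hxy with h | h <;>
      · rw [SimpleGraph.Walk.length_cons]; omega

end Tree2

section Colour
variable (G : SimpleGraph V) [Fintype V] [DecidableRel G.Adj]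

/-- an injective enumeration of the neighbours of `u` -/
noncomputable def eFn (u x : V) : ℕ :=
  if hx : x ∈ G.neighborFinset u then ((G.neighborFinset u).equivFin ⟨x, hx⟩ : Fin _).val else 0

lemma eFn_lt {u x : V} (ha : G.Adj u x) : eFn G u x < G.degree u := by
  have hx : x ∈ G.neighborFinset u := by simpa using ha
  rw [eFn, dif_pos hx, ← G.card_neighborFinset_eq_degree]
  exact ((G.neighborFinset u).equivFin ⟨x, hx⟩).isLt

lemma eFn_inj {u x y : V} (hx : G.Adj u x) (hy : G.Adj u y)
    (he : eFn G u x = eFn G u y) : x = y := by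
  have hx' : x ∈ G.neighborFinset u := by simpa using hx
  have hy' : y ∈ G.neighborFinset u := by simpa using hy
  rw [eFn, dif_pos hx', eFn, dif_pos hy'] at he
  have := (G.neighborFinset u).equivFin.injective (Fin.val_injective he)
  exact congrArg Subtype.val this

/-- recursive colouring of a rooted tree such that every neighbourhood is rainbow -/
noncomputable def col (hT : G.IsTree) (r : V) (Δ : ℕ) (v : V) : ZMod Δ :=
  if hv : v = r then 0
  else if hu : par G hT r v = r then (eFn G (par G hT r v) v : ZMod Δ)
  else (eFn G (par G hT r v) v : ZMod Δ) + col hT r Δ (par G hT r (par G hT r v))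
       - (eFn G (par G hT r v) (par G hT r (par G hT r v)) : ZMod Δ)
termination_by G.dist r v
decreasing_by
  classical
  have h1 := (par_spec G hT hv).2
  have h2 := (par_spec G hT hu).2
  omega

lemma col_of_par (hT : G.IsTree) (r : V) (Δ : ℕ) {v : V} (hv : v ≠ r) :
    col G hT r Δ v = (eFn G (par G hT r v) v : ZMod Δ) +
      (if par G hT r v = r then 0 else col G hT r Δ (par G hT r (par G hT r v))
        - (eFn G (par G hT r v) (par G hT r (par G hT r v)) : ZMod Δ)) := by
  by_cases h2 : par G hT r v = r
  · rw [col, dif_neg hv, dif_pos h2, if_pos h2, add_zero]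
  · rw [col, dif_neg hv, dif_neg h2, if_neg h2]; ring

lemma col_rainbow (hT : G.IsTree) (r : V) (Δ : ℕ) [NeZero Δ]
    (hΔ : ∀ w : V, G.degree w ≤ Δ) {m u v : V}
    (hu : G.Adj m u) (hv : G.Adj m v) (huv : u ≠ v) :
    col G hT r Δ u ≠ col G hT r Δ v := by
  have hcast : ∀ x y : V, G.Adj m x → G.Adj m y →
      ((eFn G m x : ZMod Δ) = (eFn G m y : ZMod Δ)) → x = y := by
    intro x y hx hy he
    apply eFn_inj G hx hy
    have h1 : eFn G m x < Δ := lt_of_lt_of_le (eFn_lt G hx) (hΔ m)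
    have h2 : eFn G m y < Δ := lt_of_lt_of_le (eFn_lt G hy) (hΔ m)
    have := congrArg ZMod.val he
    rwa [ZMod.val_cast_of_lt h1, ZMod.val_cast_of_lt h2] at this
  intro he
  rcases adj_cases G hT r hu with ⟨hur, hpu⟩ | ⟨hmr, hpm⟩
  · rcases adj_cases G hT r hv with ⟨hvr, hpv⟩ | ⟨hmr, hpm⟩
    · -- both children of m
      rw [col_of_par G hT r Δ hur, col_of_par G hT r Δ hvr, hpu, hpv] at he
      exact huv (hcast u v hu hv (by linear_combination he))
    · -- u child of m, v = par m
      rw [col_of_par G hT r Δ hur, hpu, if_neg hmr, hpm] at he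
      exact huv (hcast u v hu hv (by linear_combination he))
  · rcases adj_cases G hT r hv with ⟨hvr, hpv⟩ | ⟨hmr2, hpm2⟩
    · -- v child of m, u = par m
      rw [col_of_par G hT r Δ hvr, hpv, if_neg hmr, hpm] at he
      exact huv (hcast u v hu hv (by linear_combination he))
    · exact huv (hpm ▸ hpm2 : u = v)

end Colour

lemma absHelp {A B : ℕ} (h : ℕ) (hAB : A + h ≤ B) : (h : ℤ) ≤ |(A : ℤ) - (B : ℤ)| := by
  rw [abs_sub_comm]
  calc (h : ℤ) ≤ (B : ℤ) - A := by push_cast; omega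
    _ ≤ |(B : ℤ) - A| := le_abs_self _

section Upper
variable (G : SimpleGraph V) [Fintype V] [DecidableRel G.Adj]

lemma upper_bound (hT : G.IsTree) (r : V) (h p : ℕ) (hp : 1 ≤ p) (hph : p ≤ h)
    (hΔ2 : 2 ≤ G.maxDegree) :
    ∃ f : V → ℕ, IsElegantLLabelling G h p (h + 2 * (G.maxDegree - 1) * p) f := by
  classical
  set Δ := G.maxDegree with hΔdef
  haveI : NeZero Δ := ⟨by omega⟩
  set d := Δ - 1 with hd
  have hd1 : 1 ≤ d := by omega
  have hΔd : Δ = d + 1 := by omega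
  set B := h + 2 * d * p with hB
  have hBeq : h + 2 * (Δ - 1) * p = B := rfl
  set c : V → ℕ := fun v => (col G hT r Δ v).val with hc
  have hcd : ∀ v, c v ≤ d := by
    intro v
    have := ZMod.val_lt (col G hT r Δ v)
    simp only [hc]; omega
  set f : V → ℕ := fun v => (if Even (G.dist r v) then 0 else h + d * p) + p * c v with hf
  -- parity transfer
  have parity : ∀ u v : V, (G.dist r u + G.dist u v) % 2 = G.dist r v % 2 := by
    intro u v
    obtain ⟨W, hW, hlen⟩ := hT.isConnected.exists_path_of_dist u v
    have := walk_parity G hT r W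
    rwa [hlen] at this
  -- rainbow at distance two
  have rainbow2 : ∀ u v : V, G.dist u v = 2 → c u ≠ c v := by
    intro u v h2
    obtain ⟨W, hW, hlen⟩ := hT.isConnected.exists_path_of_dist u v
    rw [h2] at hlen
    have huv : u ≠ v := by
      intro e; subst e; rw [SimpleGraph.dist_self] at h2; omega
    cases W with
    | nil => simp at hlen
    | @cons _ m _ ha q =>
      cases q with
      | nil => simp at hlen
      | @cons _ m2 _ hb q2 =>
        cases q2 with
        | nil =>
          have hcol := col_rainbow G hT r Δ (fun w => G.degree_le_maxDegree w)
            ha.symm hb huv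
          intro he
          apply hcol
          have : (col G hT r Δ u).val = (col G hT r Δ v).val := he
          exact ZMod.val_injective _ this
        | cons _ _ => simp [SimpleGraph.Walk.length_cons] at hlen
  -- block separation
  have blocksep : ∀ u v : V, G.dist u v % 2 = 1 →
      (h : ℤ) ≤ |(f u : ℤ) - (f v : ℤ)| := by
    intro u v hodd
    have hpar2 := parity u v
    have hpd : p * d = d * p := Nat.mul_comm p d
    by_cases h1 : Even (G.dist r u)
    · have h2 : ¬ Even (G.dist r v) := by
        rw [Nat.not_even_iff]; rw [Nat.even_iff] at h1; omega
      have hle : f u + h ≤ f v := by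
        simp only [hf, if_pos h1, if_neg h2]
        have h3 : p * c u ≤ p * d := Nat.mul_le_mul_left p (hcd u)
        omega
      exact absHelp h hle
    · have h2 : Even (G.dist r v) := by
        rw [Nat.even_iff]; rw [Nat.not_even_iff] at h1; omega
      have hle : f v + h ≤ f u := by
        simp only [hf, if_pos h2, if_neg h1]
        have h3 : p * c v ≤ p * d := Nat.mul_le_mul_left p (hcd v)
        omega
      rw [abs_sub_comm]
      exact absHelp h hle
  -- same-block separation at distance 2
  have samesep : ∀ u v : V, G.dist u v = 2 → (p : ℤ) ≤ |(f u : ℤ) - (f v : ℤ)| := by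
    intro u v h2
    have hcne : c u ≠ c v := rainbow2 u v h2
    have hpar2 := parity u v
    rw [h2] at hpar2
    have hiff : Even (G.dist r u) ↔ Even (G.dist r v) := by
      rw [Nat.even_iff, Nat.even_iff]; omega
    have hbase : (if Even (G.dist r u) then (0:ℕ) else h + d * p)
        = (if Even (G.dist r v) then (0:ℕ) else h + d * p) := if_congr hiff rfl rfl
    rcases Nat.lt_or_ge (c u) (c v) with hlt | hge
    · have hle : f u + p ≤ f v := by
        simp only [hf]
        have h3 : p * (c u + 1) ≤ p * c v := Nat.mul_le_mul_left p hlt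
        rw [Nat.mul_add, Nat.mul_one] at h3
        omega
      exact absHelp p hle
    · have hlt2 : c v < c u := lt_of_le_of_ne hge (Ne.symm hcne)
      have hle : f v + p ≤ f u := by
        simp only [hf]
        have h3 : p * (c v + 1) ≤ p * c u := Nat.mul_le_mul_left p hlt2
        rw [Nat.mul_add, Nat.mul_one] at h3
        omega
      rw [abs_sub_comm]
      exact absHelp p hle
  have hpd : p * d = d * p := Nat.mul_comm p d
  have hB2 : 2 * (Δ - 1) * p = d * p + d * p := by rw [hd]; ring
  have hspan : ∀ v, f v ≤ B := by
    intro v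
    simp only [hf]
    have h3 : p * c v ≤ p * d := Nat.mul_le_mul_left p (hcd v)
    split_ifs <;> omega
  have hL : IsLLabelling G h p B f := by
    refine ⟨hspan, ?_, ?_⟩
    · intro u v h1
      exact blocksep u v (by omega)
    · intro u v h23
      rcases h23 with h2 | h3
      · exact samesep u v h2
      · exact le_trans (by exact_mod_cast hph) (blocksep u v (by omega))
  -- elegance
  set aE : ZMod (B+1) := ((h + d * p : ℕ) : ZMod (B+1)) with haE
  set I : V → Set (ZMod (B+1)) := fun u =>
    if Even (G.dist r u) then {x | ∃ i : ℕ, i ≤ d * p ∧ x = aE + (i : ZMod (B+1))}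
    else {x | ∃ i : ℕ, i ≤ d * p ∧ x = 0 + (i : ZMod (B+1))} with hI
  have hcast_lt : ∀ i j : ℕ, i ≤ d * p → j ≤ d * p →
      (aE + (i : ZMod (B+1)) = 0 + (j : ZMod (B+1))) → False := by
    intro i j hi hj he
    have h1 : ((h + d * p + i : ℕ) : ZMod (B+1)) = ((j : ℕ) : ZMod (B+1)) := by
      rw [haE] at he; push_cast at he ⊢; rw [zero_add] at he; linear_combination he
    have hlt1 : h + d * p + i < B + 1 := by omega
    have hlt2 : j < B + 1 := by omega
    have := congrArg ZMod.val h1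
    rw [ZMod.val_cast_of_lt hlt1, ZMod.val_cast_of_lt hlt2] at this
    omega
  refine ⟨f, hL, I, ?_, ?_, ?_⟩
  · intro u
    by_cases hu : Even (G.dist r u)
    · exact ⟨aE, d * p, by rw [hI]; simp only [if_pos hu]⟩
    · exact ⟨0, d * p, by rw [hI]; simp only [if_neg hu]⟩
  · intro u w haw
    have h1 : G.dist u w = 1 := dist_eq_one_iff_adj.mpr haw
    have hpar2 := parity u w
    rw [h1] at hpar2
    have h3 : p * c w ≤ d * p := by
      have := Nat.mul_le_mul_left p (hcd w); omega
    by_cases hu : Even (G.dist r u)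
    · have hw : ¬ Even (G.dist r w) := by
        rw [Nat.not_even_iff]; rw [Nat.even_iff] at hu; omega
      simp only [hI, if_pos hu, Set.mem_setOf_eq]
      refine ⟨p * c w, h3, ?_⟩
      simp only [hf, if_neg hw, haE]
      push_cast
      ring
    · have hw : Even (G.dist r w) := by
        rw [Nat.even_iff]; rw [Nat.not_even_iff] at hu; omega
      simp only [hI, if_neg hu, Set.mem_setOf_eq]
      refine ⟨p * c w, h3, ?_⟩
      simp only [hf, if_pos hw]
      push_cast
      ring
  · intro u v hadj
    have h1 : G.dist u v = 1 := dist_eq_one_iff_adj.mpr hadj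
    have hpar2 := parity u v
    rw [h1] at hpar2
    rw [Set.eq_empty_iff_forall_notMem]
    rintro x ⟨hx1, hx2⟩
    by_cases hu : Even (G.dist r u)
    · have hv : ¬ Even (G.dist r v) := by
        rw [Nat.not_even_iff]; rw [Nat.even_iff] at hu; omega
      simp only [hI, if_pos hu, Set.mem_setOf_eq] at hx1
      simp only [hI, if_neg hv, Set.mem_setOf_eq] at hx2
      obtain ⟨i, hi, hxe⟩ := hx1
      obtain ⟨j, hj, hxo⟩ := hx2
      exact hcast_lt i j hi hj (hxe ▸ hxo ▸ rfl)
    · have hv : Even (G.dist r v) := by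
        rw [Nat.even_iff]; rw [Nat.not_even_iff] at hu; omega
      simp only [hI, if_neg hu, Set.mem_setOf_eq] at hx1
      simp only [hI, if_pos hv, Set.mem_setOf_eq] at hx2
      obtain ⟨i, hi, hxe⟩ := hx1
      obtain ⟨j, hj, hxo⟩ := hx2
      exact hcast_lt j i hj hi (hxo ▸ hxe ▸ rfl)

end Upper


section Lower
variable (G : SimpleGraph V)

lemma dist_two (hT : G.IsTree) {a m b : V} (h1 : G.Adj a m) (h2 : G.Adj m b)
    (hab : a ≠ b) : G.dist a b = 2 := by
  have hP : (SimpleGraph.Walk.cons h1 (SimpleGraph.Walk.cons h2 SimpleGraph.Walk.nil)).IsPath := by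
    simp [SimpleGraph.Walk.cons_isPath_iff, h1.ne, h2.ne, h2.ne', hab]
  simpa using tree_dist_eq G hT hP

lemma dist_three (hT : G.IsTree) {a m m' b : V} (h1 : G.Adj a m) (h2 : G.Adj m m')
    (h3 : G.Adj m' b) (ham' : a ≠ m') (hab : a ≠ b) (hmb : m ≠ b) : G.dist a b = 3 := by
  have hP : (SimpleGraph.Walk.cons h1 (SimpleGraph.Walk.cons h2
      (SimpleGraph.Walk.cons h3 SimpleGraph.Walk.nil))).IsPath := by
    simp [SimpleGraph.Walk.cons_isPath_iff, h1.ne, h2.ne, h3.ne, h3.ne', ham', hab, hmb]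
  simpa using tree_dist_eq G hT hP

variable [Fintype V] [DecidableRel G.Adj]

lemma maxdeg_two (hT : G.IsTree) (hdiam : ∃ u v : V, 3 ≤ G.dist u v) :
    2 ≤ G.maxDegree := by
  classical
  obtain ⟨u, v, huv⟩ := hdiam
  obtain ⟨W, hW, hlen⟩ := hT.isConnected.exists_path_of_dist u v
  cases W with
  | nil => simp at huv
  | @cons _ m _ ha q =>
    cases q with
    | nil => simp at hlen; omega
    | @cons _ m2 _ hb q2 =>
      rw [SimpleGraph.Walk.cons_isPath_iff] at hW
      obtain ⟨hW1, hu1⟩ := hW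
      have hum2 : u ≠ m2 := by
        intro e; subst e
        exact hu1 (by simp [SimpleGraph.Walk.support_cons,
          SimpleGraph.Walk.start_mem_support])
      have hsub : ({u, m2} : Finset V) ⊆ G.neighborFinset m := by
        intro x hx
        simp only [Finset.mem_insert, Finset.mem_singleton] at hx
        rcases hx with rfl | rfl
        · simpa [SimpleGraph.mem_neighborFinset] using ha.symm
        · rw [SimpleGraph.Walk.cons_isPath_iff] at hW1
          simpa [SimpleGraph.mem_neighborFinset] using hb
      have h2 : 2 ≤ G.degree m := by
        rw [← SimpleGraph.card_neighborFinset_eq_degree]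
        calc 2 = ({u, m2} : Finset V).card := by rw [Finset.card_insert_of_notMem
          (by simpa using hum2), Finset.card_singleton]
          _ ≤ _ := Finset.card_le_card hsub
      exact le_trans h2 (G.degree_le_maxDegree m)

lemma lower_core (hT : G.IsTree) (h p ℓ : ℕ) (hp : 1 ≤ p) (hph : p ≤ h)
    (r v : V) (hrv : G.Adj r v)
    (hdegr : G.degree r = G.maxDegree) (hdegv : G.degree v = G.maxDegree)
    (f : V → ℕ) (hf0 : ∀ w, f w ≤ ℓ)
    (hf1 : ∀ u w, G.dist u w = 1 → (h : ℤ) ≤ |(f u : ℤ) - (f w : ℤ)|)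
    (hf2 : ∀ u w, G.dist u w = 2 ∨ G.dist u w = 3 → (p : ℤ) ≤ |(f u : ℤ) - (f w : ℤ)|)
    (hxy : f r < f v)
    (hmin : ∀ w, G.Adj r w → (f v : ℤ) - f r ≤ |(f w : ℤ) - f r|) :
    h + 2 * (G.maxDegree - 1) * p ≤ ℓ := by
  classical
  set Δ := G.maxDegree with hΔ
  have hΔ1 : 1 ≤ Δ := by
    rw [← hdegr, ← SimpleGraph.card_neighborFinset_eq_degree]
    exact Finset.card_pos.mpr ⟨v, by simpa [SimpleGraph.mem_neighborFinset] using hrv⟩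
  set S : Finset V := G.neighborFinset r ∪ G.neighborFinset v with hS
  have hdisj : Disjoint (G.neighborFinset r) (G.neighborFinset v) := by
    rw [Finset.disjoint_left]
    intro w hw1 hw2
    rw [SimpleGraph.mem_neighborFinset] at hw1 hw2
    have hd2 : G.dist r v = 2 := dist_two G hT hw1 hw2.symm hrv.ne
    rw [dist_eq_one_iff_adj.mpr hrv] at hd2
    omega
  have hcardS : S.card = 2 * Δ := by
    rw [hS, Finset.card_union_of_disjoint hdisj]
    rw [SimpleGraph.card_neighborFinset_eq_degree, SimpleGraph.card_neighborFinset_eq_degree,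
      hdegr, hdegv]
    ring
  -- distances/separation between members of S
  have hsep : ∀ a ∈ S, ∀ b ∈ S, a ≠ b → (p : ℤ) ≤ |(f a : ℤ) - (f b : ℤ)| := by
    have cross : ∀ a b : V, G.Adj r a → G.Adj v b → a ≠ b →
        (p : ℤ) ≤ |(f a : ℤ) - (f b : ℤ)| := by
      intro a b hra hvb hab
      by_cases hav : a = v
      · subst hav
        exact le_trans (by exact_mod_cast hph) (hf1 a b (dist_eq_one_iff_adj.mpr hvb))
      · by_cases hbr : b = r
        · subst hbr
          exact le_trans (by exact_mod_cast hph)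
            (hf1 a b (dist_eq_one_iff_adj.mpr hra.symm))
        · exact hf2 a b (Or.inr (dist_three G hT hra.symm hrv hvb hav hab
            (fun e => hbr e.symm)))
    intro a ha b hb hab
    simp only [hS, Finset.mem_union, SimpleGraph.mem_neighborFinset] at ha hb
    rcases ha with ha | ha
    · rcases hb with hb | hb
      · exact hf2 a b (Or.inl (dist_two G hT ha.symm hb hab))
      · exact cross a b ha hb hab
    · rcases hb with hb | hb
      · rw [abs_sub_comm]
        exact cross b a hb ha (Ne.symm hab)
      · exact hf2 a b (Or.inl (dist_two G hT ha.symm hb hab))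
  -- image of labels
  set A : Finset ℤ := S.image (fun w => (f w : ℤ)) with hA
  have hinj : Set.InjOn (fun w => (f w : ℤ)) S := by
    intro a ha b hb he
    by_contra hne
    have hthis := hsep a ha b hb hne
    have he' : ((f a : ℤ)) = (f b : ℤ) := he
    rw [he'] at hthis
    simp at hthis
    omega
  have hcardA : A.card = 2 * Δ := by rw [hA, Finset.card_image_of_injOn hinj, hcardS]
  have hsepA : ∀ a ∈ A, ∀ b ∈ A, a ≠ b → (p : ℤ) ≤ |a - b| := by
    intro a ha b hb hab
    rw [hA, Finset.mem_image] at ha hb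
    obtain ⟨wa, hwa, rfl⟩ := ha
    obtain ⟨wb, hwb, rfl⟩ := hb
    exact hsep wa hwa wb hwb (fun e => hab (by rw [e]))
  have hnonneg : ∀ a ∈ A, (0 : ℤ) ≤ a := by
    intro a ha
    rw [hA, Finset.mem_image] at ha
    obtain ⟨w, hw, rfl⟩ := ha
    positivity
  have hupper : ∀ a ∈ A, a ≤ (ℓ : ℤ) := by
    intro a ha
    rw [hA, Finset.mem_image] at ha
    obtain ⟨w, hw, rfl⟩ := ha
    exact_mod_cast hf0 w
  set x : ℤ := (f r : ℤ) with hx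
  set y : ℤ := (f v : ℤ) with hy
  have hrS : r ∈ S := by
    rw [hS, Finset.mem_union]; right
    simpa [SimpleGraph.mem_neighborFinset] using hrv.symm
  have hvS : v ∈ S := by
    rw [hS, Finset.mem_union]; left
    simpa [SimpleGraph.mem_neighborFinset] using hrv
  have hxA : x ∈ A := Finset.mem_image_of_mem _ hrS
  have hyA : y ∈ A := Finset.mem_image_of_mem _ hvS
  have hxy' : x < y := by rw [hx, hy]; exact_mod_cast hxy
  have hyx : (h : ℤ) ≤ y - x := by
    have := hf1 r v (dist_eq_one_iff_adj.mpr hrv)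
    rw [← hx, ← hy, abs_sub_comm, abs_of_nonneg (by omega)] at this
    omega
  -- middle elements
  have hmid : ∀ z ∈ A, x < z → z < y → x + p ≤ z ∧ z ≤ y - h := by
    intro z hz hxz hzy
    rw [hA, Finset.mem_image] at hz
    obtain ⟨w, hw, rfl⟩ := hz
    simp only [hS, Finset.mem_union, SimpleGraph.mem_neighborFinset] at hw
    rcases hw with hw | hw
    · exfalso
      have := hmin w hw
      rw [abs_of_nonneg (by omega)] at this
      omega
    · -- w is a neighbour of v
      have hwr : w ≠ r := by
        intro e; subst e; rw [← hx] at hxz; omega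
      have h1 : (h : ℤ) ≤ |(f w : ℤ) - y| := by
        rw [hy]; exact hf1 w v (dist_eq_one_iff_adj.mpr hw.symm)
      have h2 : (p : ℤ) ≤ |(f w : ℤ) - x| := by
        rw [hx]
        exact hf2 w r (Or.inl (dist_two G hT hw.symm hrv.symm hwr))
      rw [abs_of_nonpos (by omega)] at h1
      rw [abs_of_nonneg (by omega)] at h2
      omega
  -- the three side sets
  set A1 : Finset ℤ := A.filter (fun z => z < x) with hA1
  set A2 : Finset ℤ := A.filter (fun z => x < z ∧ z < y) with hA2
  set A3 : Finset ℤ := A.filter (fun z => y < z) with hA3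
  have hcards : A1.card + A2.card + A3.card + 2 = 2 * Δ := by
    have hsplit : (A.erase x).erase y = A1 ∪ A2 ∪ A3 := by
      ext z
      simp only [Finset.mem_erase, Finset.mem_union, hA1, hA2, hA3, Finset.mem_filter]
      constructor
      · rintro ⟨hzy, hzx, hzA⟩
        have : z < x ∨ (x < z ∧ z < y) ∨ y < z := by omega
        tauto
      · intro hz
        rcases hz with (⟨hzA, h'⟩ | ⟨hzA, h'⟩) | ⟨hzA, h'⟩ <;>
          exact ⟨by omega, by omega, hzA⟩
    have hd12 : Disjoint A1 A2 := by
      rw [Finset.disjoint_left]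
      intro z hz1 hz2
      rw [hA1, Finset.mem_filter] at hz1
      rw [hA2, Finset.mem_filter] at hz2
      omega
    have hd123 : Disjoint (A1 ∪ A2) A3 := by
      rw [Finset.disjoint_left]
      intro z hz1 hz2
      rw [hA3, Finset.mem_filter] at hz2
      rw [Finset.mem_union, hA1, hA2, Finset.mem_filter, Finset.mem_filter] at hz1
      rcases hz1 with hz1 | hz1 <;> omega
    have hyex : y ∈ A.erase x := Finset.mem_erase.mpr ⟨by omega, hyA⟩
    have := Finset.card_erase_of_mem hyex
    have h2 := Finset.card_erase_of_mem hxA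
    rw [hsplit, Finset.card_union_of_disjoint hd123, Finset.card_union_of_disjoint hd12] at this
    omega
  -- bounds from the three sets
  have hb1 : (A1.card : ℤ) * p ≤ x := by
    rcases Finset.eq_empty_or_nonempty A1 with he | hne
    · rw [he]; simp
      rw [hx]; positivity
    · have := sepSpan p A1.card A1 0 (x - p) rfl hne
        (fun a ha b hb hab => hsepA a (Finset.mem_of_mem_filter a ha)
          b (Finset.mem_of_mem_filter b hb) hab)
        (fun a ha => hnonneg a (Finset.mem_of_mem_filter a ha))
        (fun a ha => by
          have haA := Finset.mem_of_mem_filter a ha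
          rw [hA1, Finset.mem_filter] at ha
          have hax : a ≠ x := by omega
          have := hsepA a haA x hxA hax
          rw [abs_of_nonpos (by omega)] at this
          omega)
      have hc1 : 1 ≤ A1.card := Finset.card_pos.mpr hne
      have hcc : ((A1.card : ℤ) - 1) * p = A1.card * p - p := by ring
      omega
  have hb2 : (h : ℤ) + A2.card * p ≤ y - x := by
    rcases Finset.eq_empty_or_nonempty A2 with he | hne
    · rw [he]; simp; omega
    · have := sepSpan p A2.card A2 (x + p) (y - h) rfl hne
        (fun a ha b hb hab => hsepA a (Finset.mem_of_mem_filter a ha)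
          b (Finset.mem_of_mem_filter b hb) hab)
        (fun a ha => by
          have haA := Finset.mem_of_mem_filter a ha
          rw [hA2, Finset.mem_filter] at ha
          exact (hmid a haA ha.2.1 ha.2.2).1)
        (fun a ha => by
          have haA := Finset.mem_of_mem_filter a ha
          rw [hA2, Finset.mem_filter] at ha
          exact (hmid a haA ha.2.1 ha.2.2).2)
      have hcc : (x + p) + ((A2.card : ℤ) - 1) * p = x + A2.card * p := by ring
      omega
  have hb3 : y + (A3.card : ℤ) * p ≤ ℓ := by
    rcases Finset.eq_empty_or_nonempty A3 with he | hne
    · rw [he]; simp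
      have := hupper y hyA; omega
    · have := sepSpan p A3.card A3 (y + p) ℓ rfl hne
        (fun a ha b hb hab => hsepA a (Finset.mem_of_mem_filter a ha)
          b (Finset.mem_of_mem_filter b hb) hab)
        (fun a ha => by
          have haA := Finset.mem_of_mem_filter a ha
          rw [hA3, Finset.mem_filter] at ha
          have hay : a ≠ y := by omega
          have := hsepA a haA y hyA hay
          rw [abs_of_nonneg (by omega)] at this
          omega)
        (fun a ha => hupper a (Finset.mem_of_mem_filter a ha))
      have hcc : (y + p) + ((A3.card : ℤ) - 1) * p = y + A3.card * p := by ring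
      omega
  -- combine
  have hsum : (A1.card : ℤ) + A2.card + A3.card = 2 * Δ - 2 := by
    have : (A1.card : ℤ) + A2.card + A3.card + 2 = 2 * Δ := by exact_mod_cast hcards
    omega
  have hfinal : (h : ℤ) + (2 * (Δ : ℤ) - 2) * p ≤ ℓ := by
    have hprod : (A1.card : ℤ) * p + A2.card * p + A3.card * p = (2 * (Δ : ℤ) - 2) * p := by
      linear_combination (p : ℤ) * hsum
    linarith
  have hcast : ((h + 2 * (Δ - 1) * p : ℕ) : ℤ) ≤ (ℓ : ℤ) := by
    push_cast [Nat.cast_sub hΔ1]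
    linarith
  exact_mod_cast hcast

lemma lower_bound (hT : G.IsTree) (h p ℓ : ℕ) (hp : 1 ≤ p) (hph : p ≤ h)
    (r : V) (hdegr : G.degree r = G.maxDegree)
    (hnbr : ∀ w : V, G.Adj r w → G.degree w = G.maxDegree)
    (hΔ2 : 2 ≤ G.maxDegree)
    (f : V → ℕ) (hf : IsLLabelling G h p ℓ f) :
    h + 2 * (G.maxDegree - 1) * p ≤ ℓ := by
  classical
  obtain ⟨hf0, hf1, hf2⟩ := hf
  have hne : (G.neighborFinset r).Nonempty := by
    rw [← Finset.card_pos, SimpleGraph.card_neighborFinset_eq_degree, hdegr]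
    omega
  obtain ⟨v, hvmem, hvmin⟩ := Finset.exists_min_image (G.neighborFinset r)
    (fun w => |(f w : ℤ) - f r|) hne
  rw [SimpleGraph.mem_neighborFinset] at hvmem
  have hdegv : G.degree v = G.maxDegree := hnbr v hvmem
  have hfrv : f r ≠ f v := by
    have := hf1 r v (dist_eq_one_iff_adj.mpr hvmem)
    intro e; rw [e] at this; simp at this; omega
  have hmin' : ∀ w, G.Adj r w → |(f v : ℤ) - f r| ≤ |(f w : ℤ) - f r| := by
    intro w hw
    exact hvmin w (by simpa [SimpleGraph.mem_neighborFinset] using hw)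
  rcases Nat.lt_or_ge (f r) (f v) with hlt | hge
  · apply lower_core G hT h p ℓ hp hph r v hvmem hdegr hdegv f hf0 hf1 hf2 hlt
    intro w hw
    have := hmin' w hw
    rw [abs_of_nonneg (by push_cast; omega)] at this
    exact this
  · have hlt : f v < f r := by omega
    set g : V → ℕ := fun w => ℓ - f w with hg
    have hgcast : ∀ w, ((g w : ℤ)) = (ℓ : ℤ) - f w := by
      intro w
      rw [hg]
      push_cast [hf0 w]
      ring
    have habs : ∀ a b : V, |(g a : ℤ) - g b| = |(f a : ℤ) - f b| := by
      intro a b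
      rw [hgcast, hgcast, ← abs_neg]
      congr 1
      ring
    apply lower_core G hT h p ℓ hp hph r v hvmem hdegr hdegv g
      (fun w => Nat.sub_le ℓ (f w))
      (fun u w hd => by rw [habs]; exact hf1 u w hd)
      (fun u w hd => by rw [habs]; exact hf2 u w hd)
    · rw [hg]
      simp only
      have := hf0 r; have := hf0 v
      omega
    · intro w hw
      have h1 := hmin' w hw
      rw [habs]
      rw [hgcast, hgcast]
      have h2 : (f v : ℤ) ≤ f r := by exact_mod_cast hge
      rw [abs_sub_comm, abs_of_nonneg (by omega)] at h1
      have : ((ℓ : ℤ) - f v) - ((ℓ : ℤ) - f r) = (f r : ℤ) - f v := by ring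
      rw [this]
      exact h1

end Lower

theorem stmt5 {V : Type} [Fintype V] (G : SimpleGraph V) [DecidableRel G.Adj]
    (hT : G.IsTree) (hdiam : ∃ u v : V, 3 ≤ G.dist u v)
    (hsub : ∃ r : V, G.degree r = G.maxDegree ∧
      ∀ v : V, G.Adj r v → G.degree v = G.maxDegree)
    (h p : ℕ) (hp : 1 ≤ p) (hph : p ≤ h) :
    lambdaNum G h p = h + 2 * (G.maxDegree - 1) * p ∧
    lambdaStar G h p = h + 2 * (G.maxDegree - 1) * p := by
  classical
  obtain ⟨r, hdegr, hnbr⟩ := hsub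
  have hΔ2 : 2 ≤ G.maxDegree := maxdeg_two G hT hdiam
  obtain ⟨f0, hf0⟩ := upper_bound G hT r h p hp hph hΔ2
  set B := h + 2 * (G.maxDegree - 1) * p with hB
  have hmemE : B ∈ {ℓ : ℕ | ∃ f : V → ℕ, IsElegantLLabelling G h p ℓ f} := ⟨f0, hf0⟩
  have hmemL : B ∈ {ℓ : ℕ | ∃ f : V → ℕ, IsLLabelling G h p ℓ f} := ⟨f0, hf0.1⟩
  have hlow : ∀ ℓ ∈ {ℓ : ℕ | ∃ f : V → ℕ, IsLLabelling G h p ℓ f}, B ≤ ℓ := by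
    rintro ℓ ⟨f, hf⟩
    exact lower_bound G hT h p ℓ hp hph r hdegr hnbr hΔ2 f hf
  constructor
  · exact le_antisymm (Nat.sInf_le hmemL) (le_csInf ⟨B, hmemL⟩ hlow)
  · refine le_antisymm (Nat.sInf_le hmemE) (le_csInf ⟨B, hmemE⟩ ?_)
    rintro ℓ ⟨f, hf⟩
    exact hlow ℓ ⟨f, hf.1⟩
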